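/- arXiv:1212.3688 — 2 statements merged into one kernel-verified Lean document; each statement's English description precedes it below -/
import Mathlib

section
/- Let X be a real Banach space, let f : X → ℝ be locally Lipschitz, and let x ∈ X, with f Lipschitz of constant K on some neighborhood of x. Then the Clarke subdifferential ∂f(x) = {x* ∈ X* : ⟨x*, h⟩ ≤ f⁰(x;h) for all h ∈ X} is nonempty, convex, bounded (every x* ∈ ∂f(x) satisfies ‖x*‖_{X*} ≤ K), and compact in the weak* topology of X*. -/
open Filter Topology

/-- The Clarke generalized directional derivative of `f` at `x` in direction `h`:
`f⁰(x;h) = limsup_{y → x, t ↓ 0} (f(y + t h) − f(y)) / t`. -/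
noncomputable def clarkeDeriv {X : Type*} [NormedAddCommGroup X] [NormedSpace ℝ X]
    (f : X → ℝ) (x h : X) : ℝ :=
  limsup (fun q : X × ℝ => (f (q.1 + q.2 • h) - f q.1) / q.2) ((𝓝 x) ×ˢ (𝓝[>] (0 : ℝ)))

/-- The Clarke subdifferential `∂f(x) = {x* ∈ X* : ⟨x*, h⟩ ≤ f⁰(x;h) for all h ∈ X}`. -/
def clarkeSubdiff {X : Type*} [NormedAddCommGroup X] [NormedSpace ℝ X]
    (f : X → ℝ) (x : X) : Set (X →L[ℝ] ℝ) :=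
  {φ | ∀ h : X, φ h ≤ clarkeDeriv f x h}

section Aux

variable {X : Type*} [NormedAddCommGroup X] [NormedSpace ℝ X]
  {f : X → ℝ} {x : X} {K : NNReal} {s : Set X}

/-- The difference quotient in direction `h`. -/
private noncomputable def DQ (f : X → ℝ) (h : X) : X × ℝ → ℝ :=
  fun q => (f (q.1 + q.2 • h) - f q.1) / q.2

private lemma clarke_ev_bound (hs : s ∈ 𝓝 x) (hL : LipschitzOnWith K f s) (h : X) :
    ∀ᶠ q : X × ℝ in (𝓝 x) ×ˢ (𝓝[>] (0 : ℝ)), |DQ f h q| ≤ (K : ℝ) * ‖h‖ := by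
  obtain ⟨ε, εpos, hball⟩ := Metric.mem_nhds_iff.1 hs
  have h1 : Metric.ball x (ε / 2) ∈ 𝓝 x := Metric.ball_mem_nhds x (by positivity)
  have h2 : Set.Ioo (0 : ℝ) (ε / (2 * (‖h‖ + 1))) ∈ 𝓝[>] (0 : ℝ) :=
    Ioo_mem_nhdsGT_of_mem ⟨le_rfl, by positivity⟩
  filter_upwards [Filter.prod_mem_prod h1 h2] with q hq
  obtain ⟨hy, ht⟩ := hq
  have tpos : 0 < q.2 := ht.1
  have hnorm : 0 ≤ ‖h‖ := norm_nonneg h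
  have hth : q.2 * ‖h‖ < ε / 2 := by
    calc q.2 * ‖h‖ ≤ q.2 * (‖h‖ + 1) := by nlinarith
      _ < ε / (2 * (‖h‖ + 1)) * (‖h‖ + 1) :=
          mul_lt_mul_of_pos_right ht.2 (by positivity)
      _ = ε / 2 := by field_simp
  have hy' : dist q.1 x < ε / 2 := hy
  have hys : q.1 ∈ s := hball (by
    have : dist q.1 x < ε := by linarith
    simpa [Metric.mem_ball] using this)
  have hy2 : q.1 + q.2 • h ∈ s := hball (by
    have hd : dist (q.1 + q.2 • h) q.1 = q.2 * ‖h‖ := by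
      rw [dist_eq_norm]
      simp [norm_smul, abs_of_pos tpos]
    have : dist (q.1 + q.2 • h) x ≤ dist (q.1 + q.2 • h) q.1 + dist q.1 x :=
      dist_triangle _ _ _
    have : dist (q.1 + q.2 • h) x < ε := by rw [hd] at this; linarith
    simpa [Metric.mem_ball] using this)
  have key : |f (q.1 + q.2 • h) - f q.1| ≤ (K : ℝ) * (q.2 * ‖h‖) := by
    have := hL.dist_le_mul _ hy2 _ hys
    rw [Real.dist_eq, dist_eq_norm] at this
    simpa [norm_smul, abs_of_pos tpos] using this
  have : |DQ f h q| = |f (q.1 + q.2 • h) - f q.1| / q.2 := by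
    rw [DQ, abs_div, abs_of_pos tpos]
  rw [this, div_le_iff₀ tpos]
  calc |f (q.1 + q.2 • h) - f q.1| ≤ (K : ℝ) * (q.2 * ‖h‖) := key
    _ = (K : ℝ) * ‖h‖ * q.2 := by ring

private lemma clarke_bddAbove (hs : s ∈ 𝓝 x) (hL : LipschitzOnWith K f s) (h : X) :
    IsBoundedUnder (· ≤ ·) ((𝓝 x) ×ˢ (𝓝[>] (0 : ℝ))) (DQ f h) :=
  isBoundedUnder_of_eventually_le (a := (K : ℝ) * ‖h‖)
    (by filter_upwards [clarke_ev_bound hs hL h] with q hq using (abs_le.1 hq).2)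

private lemma clarke_bddBelow (hs : s ∈ 𝓝 x) (hL : LipschitzOnWith K f s) (h : X) :
    IsBoundedUnder (· ≥ ·) ((𝓝 x) ×ˢ (𝓝[>] (0 : ℝ))) (DQ f h) :=
  isBoundedUnder_of_eventually_ge (a := -((K : ℝ) * ‖h‖))
    (by filter_upwards [clarke_ev_bound hs hL h] with q hq using (abs_le.1 hq).1)

private lemma clarkeDeriv_le (hs : s ∈ 𝓝 x) (hL : LipschitzOnWith K f s) (h : X) :
    clarkeDeriv f x h ≤ (K : ℝ) * ‖h‖ :=
  limsup_le_of_le ((clarke_bddBelow hs hL h).isCoboundedUnder_le)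
    (by filter_upwards [clarke_ev_bound hs hL h] with q hq using (abs_le.1 hq).2)

private lemma neg_le_clarkeDeriv (hs : s ∈ 𝓝 x) (hL : LipschitzOnWith K f s) (h : X) :
    -((K : ℝ) * ‖h‖) ≤ clarkeDeriv f x h :=
  le_limsup_of_frequently_le
    ((by filter_upwards [clarke_ev_bound hs hL h] with q hq using (abs_le.1 hq).1 :
      ∀ᶠ q in (𝓝 x) ×ˢ (𝓝[>] (0 : ℝ)), -((K : ℝ) * ‖h‖) ≤ DQ f h q).frequently)
    (clarke_bddAbove hs hL h)

private lemma map_mul_nhdsGT (c : ℝ) (hc : 0 < c) :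
    Filter.map (fun t : ℝ => c * t) (𝓝[>] (0 : ℝ)) = 𝓝[>] (0 : ℝ) := by
  have himg : (fun t : ℝ => c * t) '' Set.Ioi 0 = Set.Ioi 0 := by
    ext y
    simp only [Set.mem_image, Set.mem_Ioi]
    constructor
    · rintro ⟨t, ht, rfl⟩; exact mul_pos hc ht
    · intro hy; exact ⟨y / c, div_pos hy hc, by field_simp⟩
  have key := (Homeomorph.mulLeft₀ c hc.ne').isEmbedding.map_nhdsWithin_eq (Set.Ioi 0) 0
  rw [Homeomorph.coe_mulLeft₀] at key
  rw [key, himg]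
  norm_num

private lemma clarkeDeriv_smul (hs : s ∈ 𝓝 x) (hL : LipschitzOnWith K f s)
    (c : ℝ) (hc : 0 < c) (h : X) :
    clarkeDeriv f x (c • h) = c * clarkeDeriv f x h := by
  have hmap : Filter.map (fun q : X × ℝ => (q.1, c * q.2)) ((𝓝 x) ×ˢ (𝓝[>] (0 : ℝ)))
      = (𝓝 x) ×ˢ (𝓝[>] (0 : ℝ)) := by
    have : (fun q : X × ℝ => (q.1, c * q.2)) = Prod.map id (fun t => c * t) := rfl
    rw [this, ← Filter.prod_map_map_eq', Filter.map_id, map_mul_nhdsGT c hc]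
  have hptwise : ∀ q : X × ℝ,
      DQ f (c • h) q = c * DQ f h (q.1, c * q.2) := by
    intro q
    show (f (q.1 + q.2 • c • h) - f q.1) / q.2
        = c * ((f (q.1 + (c * q.2) • h) - f q.1) / (c * q.2))
    rw [smul_smul, mul_comm q.2 c, mul_div_assoc', mul_div_mul_left _ _ hc.ne']
  have key : clarkeDeriv f x (c • h)
      = limsup (fun q : X × ℝ => c * DQ f h q) ((𝓝 x) ×ˢ (𝓝[>] (0 : ℝ))) := by
    have : clarkeDeriv f x (c • h)
        = limsup ((fun q : X × ℝ => c * DQ f h q) ∘ fun q : X × ℝ => (q.1, c * q.2))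
          ((𝓝 x) ×ˢ (𝓝[>] (0 : ℝ))) := by
      refine limsup_congr (Eventually.of_forall fun q => ?_)
      exact hptwise q
    rw [this, limsup_comp, hmap]
  rw [key]
  have hmono : Monotone fun a : ℝ => c * a := fun a b hab =>
    mul_le_mul_of_nonneg_left hab hc.le
  have := hmono.map_limsup_of_continuousAt (F := (𝓝 x) ×ˢ (𝓝[>] (0 : ℝ))) (DQ f h)
    ((continuous_const.mul continuous_id).continuousAt)
    (clarke_bddAbove hs hL h) ((clarke_bddBelow hs hL h).isCoboundedUnder_le)
  rw [show (fun q : X × ℝ => c * DQ f h q) = (fun a => c * a) ∘ DQ f h from rfl, ← this]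
  rfl

private lemma clarkeDeriv_add_le (hs : s ∈ 𝓝 x) (hL : LipschitzOnWith K f s)
    (h₁ h₂ : X) :
    clarkeDeriv f x (h₁ + h₂) ≤ clarkeDeriv f x h₁ + clarkeDeriv f x h₂ := by
  set L := (𝓝 x) ×ˢ (𝓝[>] (0 : ℝ)) with hL'
  set m : X × ℝ → X × ℝ := fun q => (q.1 + q.2 • h₁, q.2) with hm'
  have hm : Tendsto m L L := by
    refine Tendsto.prodMk ?_ tendsto_snd
    have h1 : Tendsto (fun q : X × ℝ => q.1) L (𝓝 x) := tendsto_fst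
    have h2 : Tendsto (fun q : X × ℝ => q.2) L (𝓝 (0 : ℝ)) :=
      tendsto_snd.mono_right nhdsWithin_le_nhds
    have : Tendsto (fun q : X × ℝ => q.1 + q.2 • h₁) L (𝓝 (x + (0 : ℝ) • h₁)) :=
      h1.add (h2.smul_const h₁)
    simpa using this
  have hptwise : ∀ q : X × ℝ,
      DQ f (h₁ + h₂) q = (DQ f h₁ + fun q => DQ f h₂ (m q)) q := by
    intro q
    show (f (q.1 + q.2 • (h₁ + h₂)) - f q.1) / q.2
        = (f (q.1 + q.2 • h₁) - f q.1) / q.2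
          + (f (q.1 + q.2 • h₁ + q.2 • h₂) - f (q.1 + q.2 • h₁)) / q.2
    rw [← add_div, smul_add, add_assoc]
    ring_nf
  have hcomp_bound : ∀ᶠ q in L, |DQ f h₂ (m q)| ≤ (K : ℝ) * ‖h₂‖ :=
    hm.eventually (clarke_ev_bound hs hL h₂)
  have hv_bddAbove : IsBoundedUnder (· ≤ ·) L (fun q => DQ f h₂ (m q)) :=
    isBoundedUnder_of_eventually_le (a := (K : ℝ) * ‖h₂‖)
      (by filter_upwards [hcomp_bound] with q hq using (abs_le.1 hq).2)
  have hv_bddBelow : IsBoundedUnder (· ≥ ·) L (fun q => DQ f h₂ (m q)) :=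
    isBoundedUnder_of_eventually_ge (a := -((K : ℝ) * ‖h₂‖))
      (by filter_upwards [hcomp_bound] with q hq using (abs_le.1 hq).1)
  have step1 : clarkeDeriv f x (h₁ + h₂)
      = limsup (DQ f h₁ + fun q => DQ f h₂ (m q)) L :=
    limsup_congr (Eventually.of_forall hptwise)
  have step2 : limsup (DQ f h₁ + fun q => DQ f h₂ (m q)) L
      ≤ limsup (DQ f h₁) L + limsup (fun q => DQ f h₂ (m q)) L :=
    limsup_add_le (clarke_bddBelow hs hL h₁) (clarke_bddAbove hs hL h₁)
      hv_bddBelow.isCoboundedUnder_le hv_bddAbove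
  have step3 : limsup (fun q => DQ f h₂ (m q)) L ≤ limsup (DQ f h₂) L := by
    have h1 : limsup (fun q => DQ f h₂ (m q)) L = limsup (DQ f h₂) (Filter.map m L) :=
      limsup_comp (DQ f h₂) m L
    rw [h1]
    have hbb : IsBoundedUnder (· ≥ ·) (Filter.map m L) (DQ f h₂) :=
      isBoundedUnder_of_eventually_ge (a := -((K : ℝ) * ‖h₂‖))
        (eventually_map.2
          (by filter_upwards [hcomp_bound] with q hq using (abs_le.1 hq).1))
    haveI : (Filter.map m L).NeBot := Filter.map_neBot
    exact limsup_le_limsup_of_le hm hbb.isCoboundedUnder_le (clarke_bddAbove hs hL h₂)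
  calc clarkeDeriv f x (h₁ + h₂)
      ≤ limsup (DQ f h₁) L + limsup (fun q => DQ f h₂ (m q)) L := step1 ▸ step2
    _ ≤ clarkeDeriv f x h₁ + clarkeDeriv f x h₂ := by
        exact add_le_add le_rfl step3

private lemma clarkeDeriv_zero : clarkeDeriv f x (0 : X) = 0 := by
  have : (fun q : X × ℝ => (f (q.1 + q.2 • (0 : X)) - f q.1) / q.2)
      = fun _ : X × ℝ => (0 : ℝ) := by
    funext q; simp
  rw [clarkeDeriv, this, limsup_const]

end Aux

theorem clarke_subdifferential_properties
    {X : Type*} [NormedAddCommGroup X] [NormedSpace ℝ X] [CompleteSpace X]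
    (f : X → ℝ) (hf : LocallyLipschitz f) (x : X) (K : NNReal)
    (hK : ∃ s ∈ 𝓝 x, LipschitzOnWith K f s) :
    (clarkeSubdiff f x).Nonempty ∧
    Convex ℝ (clarkeSubdiff f x) ∧
    (∀ φ ∈ clarkeSubdiff f x, ‖φ‖ ≤ (K : ℝ)) ∧
    IsCompact (StrongDual.toWeakDual '' (clarkeSubdiff f x)) := by
  obtain ⟨s, hs, hL⟩ := hK
  set N : X → ℝ := clarkeDeriv f x with hN
  have N_le : ∀ h : X, N h ≤ (K : ℝ) * ‖h‖ := fun h => clarkeDeriv_le hs hL h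
  have N_hom : ∀ c : ℝ, 0 < c → ∀ h : X, N (c • h) = c * N h := fun c hc h =>
    clarkeDeriv_smul hs hL c hc h
  have N_add : ∀ h₁ h₂ : X, N (h₁ + h₂) ≤ N h₁ + N h₂ := fun h₁ h₂ =>
    clarkeDeriv_add_le hs hL h₁ h₂
  have N_zero : N 0 = 0 := clarkeDeriv_zero
  -- bound on elements
  have hbound : ∀ φ ∈ clarkeSubdiff f x, ∀ h : X, |φ h| ≤ (K : ℝ) * ‖h‖ := by
    intro φ hφ h
    rw [abs_le]
    constructor
    · have h1 : φ (-h) ≤ N (-h) := hφ (-h)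
      have h2 : N (-h) ≤ (K : ℝ) * ‖h‖ := by simpa using N_le (-h)
      have : φ (-h) = -φ h := map_neg φ h
      linarith
    · exact (hφ h).trans (N_le h)
  have hnorm : ∀ φ ∈ clarkeSubdiff f x, ‖φ‖ ≤ (K : ℝ) := by
    intro φ hφ
    exact φ.opNorm_le_bound K.coe_nonneg fun h => by
      simpa [Real.norm_eq_abs] using hbound φ hφ h
  refine ⟨?_, ?_, hnorm, ?_⟩
  · -- Nonempty, via Hahn-Banach
    obtain ⟨g, -, hg⟩ := exists_extension_of_le_sublinear ⟨⊥, 0⟩ N N_hom N_add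
      (fun y => by
        have hy0 : (y : X) = 0 := Submodule.mem_bot ℝ |>.1 y.2
        show (0 : (⊥ : Submodule ℝ X) →ₗ[ℝ] ℝ) y ≤ N y
        rw [hy0, N_zero]
        simp)
    have gbound : ∀ h : X, ‖g h‖ ≤ (K : ℝ) * ‖h‖ := by
      intro h
      rw [Real.norm_eq_abs, abs_le]
      constructor
      · have h1 : g (-h) ≤ N (-h) := hg (-h)
        have h2 : N (-h) ≤ (K : ℝ) * ‖h‖ := by simpa using N_le (-h)
        have : g (-h) = -g h := map_neg g h
        linarith
      · exact (hg h).trans (N_le h)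
    refine ⟨g.mkContinuous ((K : ℝ)) gbound, fun h => ?_⟩
    exact hg h
  · -- Convex
    intro φ hφ ψ hψ a b ha hb hab
    intro h
    have h1 : a * φ h ≤ a * N h := mul_le_mul_of_nonneg_left (hφ h) ha
    have h2 : b * ψ h ≤ b * N h := mul_le_mul_of_nonneg_left (hψ h) hb
    have : (a • φ + b • ψ) h = a * φ h + b * ψ h := by
      simp [ContinuousLinearMap.add_apply, ContinuousLinearMap.smul_apply, smul_eq_mul]
    rw [this]
    calc a * φ h + b * ψ h ≤ a * N h + b * N h := add_le_add h1 h2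
      _ = (a + b) * N h := by ring
      _ = N h := by rw [hab, one_mul]
  · -- Compact in the weak* topology
    apply WeakDual.isCompact_of_bounded_of_closed
    · have hpre : StrongDual.toWeakDual ⁻¹'
          (StrongDual.toWeakDual '' clarkeSubdiff f x) = clarkeSubdiff f x :=
        Set.preimage_image_eq _ StrongDual.toWeakDual.injective
      rw [← WeakDual.isBounded_toWeakDual_preimage_iff_isBounded, hpre]
      refine Metric.isBounded_closedBall (x := (0 : X →L[ℝ] ℝ)) (r := (K : ℝ)) |>.subset ?_
      intro φ hφ
      simpa [Metric.mem_closedBall, dist_zero_right] using hnorm φ hφ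
    · have himg : StrongDual.toWeakDual '' clarkeSubdiff f x
          = ⋂ h : X, {ψ : WeakDual ℝ X | ψ h ≤ N h} := by
        ext ψ
        simp only [Set.mem_image, Set.mem_iInter, Set.mem_setOf_eq]
        constructor
        · rintro ⟨φ, hφ, rfl⟩ h
          exact hφ h
        · intro hψ
          exact ⟨StrongDual.toWeakDual.symm ψ, fun h => hψ h, by simp⟩
      rw [himg]
      exact isClosed_iInter fun h =>
        IsClosed.preimage (WeakDual.eval_continuous h) isClosed_Iic
end

section
/- Let Ω be a set, let p, r : Ω → ℝ satisfy 1 < p⁻ ≤ p(x) ≤ p⁺ < ∞ and 1 ≤ r(x) ≤ r⁺ < ∞ for all x ∈ Ω, let θ ∈ ℝ with p⁺ < θ and r⁺ ≤ θ, and let μ > 0. Let j : Ω × ℝ → ℝ and assume (i) there exists δ > 0 such that j(x,t) ≤ −(μ/2)|t|^{p(x)} for all x ∈ Ω and all t with |t| ≤ δ, and (ii) there are constants a₁, c₁ > 0 with |j(x,t)| ≤ a₁|t| + c₁|t|^{r(x)} for all x ∈ Ω and t ∈ ℝ. Then there exists γ > 0 such that j(x,t) ≤ −(μ/2)|t|^{p(x)}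 + γ|t|^{θ} for all x ∈ Ω and all t ∈ ℝ. -/
theorem potential_upper_bound_near_zero
    {Ω : Type*} (p r : Ω → ℝ) (pminus pplus rplus θ μ : ℝ)
    (hp1 : 1 < pminus)
    (hp : ∀ x, pminus ≤ p x ∧ p x ≤ pplus)
    (hr : ∀ x, 1 ≤ r x ∧ r x ≤ rplus)
    (hθp : pplus < θ) (hθr : rplus ≤ θ) (hμ : 0 < μ)
    (j : Ω → ℝ → ℝ)
    (δ : ℝ) (hδ : 0 < δ)
    (hsmall : ∀ x, ∀ t : ℝ, |t| ≤ δ → j x t ≤ -(μ / 2) * |t| ^ p x)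
    (a₁ c₁ : ℝ) (ha₁ : 0 < a₁) (hc₁ : 0 < c₁)
    (hgrowth : ∀ x, ∀ t : ℝ, |j x t| ≤ a₁ * |t| + c₁ * |t| ^ r x) :
    ∃ γ : ℝ, 0 < γ ∧ ∀ x, ∀ t : ℝ, j x t ≤ -(μ / 2) * |t| ^ p x + γ * |t| ^ θ := by
  by_cases hΩ : Nonempty Ω
  swap
  · exact ⟨1, one_pos, fun x => absurd ⟨x⟩ hΩ⟩
  obtain ⟨x₀⟩ := hΩ
  have hθ1 : (1 : ℝ) ≤ θ :=
    le_trans (le_of_lt hp1) (lt_of_le_of_lt (le_trans (hp x₀).1 (hp x₀).2) hθp).le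
  set C : ℝ := max (δ ^ (1 - θ)) 1 with hC
  have hC1 : (1 : ℝ) ≤ C := le_max_right _ _
  have hCpos : (0 : ℝ) < C := lt_of_lt_of_le one_pos hC1
  -- key estimate: for δ < |t| and 1 ≤ s ≤ θ, |t|^s ≤ C * |t|^θ
  have key : ∀ (t s : ℝ), δ < |t| → 1 ≤ s → s ≤ θ → |t| ^ s ≤ C * |t| ^ θ := by
    intro t s ht hs1 hsθ
    have ht0 : (0 : ℝ) < |t| := lt_trans hδ ht
    rcases le_or_gt 1 |t| with h1 | h1
    · calc |t| ^ s ≤ |t| ^ θ := Real.rpow_le_rpow_of_exponent_le h1 hsθ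
        _ = 1 * |t| ^ θ := (one_mul _).symm
        _ ≤ C * |t| ^ θ := by
            apply mul_le_mul_of_nonneg_right hC1 (Real.rpow_nonneg (abs_nonneg t) θ)
    · have h2 : |t| ^ s ≤ |t| ^ (1 : ℝ) :=
        Real.rpow_le_rpow_of_exponent_ge ht0 (le_of_lt h1) hs1
      have h3 : |t| ^ ((1 : ℝ) - θ) ≤ δ ^ (1 - θ) :=
        Real.rpow_le_rpow_of_nonpos hδ (le_of_lt ht) (by linarith)
      have h4 : |t| ^ (1 : ℝ) = |t| ^ ((1 : ℝ) - θ) * |t| ^ θ := by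
        rw [← Real.rpow_add ht0]; ring_nf
      calc |t| ^ s ≤ |t| ^ (1 : ℝ) := h2
        _ = |t| ^ ((1 : ℝ) - θ) * |t| ^ θ := h4
        _ ≤ δ ^ (1 - θ) * |t| ^ θ :=
            mul_le_mul_of_nonneg_right h3 (Real.rpow_nonneg (abs_nonneg t) θ)
        _ ≤ C * |t| ^ θ :=
            mul_le_mul_of_nonneg_right (le_max_left _ _) (Real.rpow_nonneg (abs_nonneg t) θ)
  refine ⟨(a₁ + c₁ + μ / 2) * C, by positivity, fun x t => ?_⟩
  have hpx := hp x
  have hrx := hr x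
  have hpθ : |t| ^ p x ≥ 0 := Real.rpow_nonneg (abs_nonneg t) _
  have htθ : |t| ^ θ ≥ 0 := Real.rpow_nonneg (abs_nonneg t) _
  rcases le_or_gt |t| δ with hsm | hlg
  · have := hsmall x t hsm
    nlinarith [mul_nonneg (mul_nonneg (by positivity : (0:ℝ) ≤ a₁ + c₁ + μ / 2) hCpos.le) htθ]
  · have hj := (abs_le.mp (hgrowth x t)).2
    have k1 : |t| ≤ C * |t| ^ θ := by
      have := key t 1 hlg le_rfl hθ1
      rwa [Real.rpow_one] at this
    have k2 : |t| ^ r x ≤ C * |t| ^ θ := key t (r x) hlg hrx.1 (le_trans hrx.2 hθr)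
    have k3 : |t| ^ p x ≤ C * |t| ^ θ :=
      key t (p x) hlg (le_trans hp1.le hpx.1) (le_trans hpx.2 hθp.le)
    nlinarith
end
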